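/- For every Fréchet space Y, the space B_1(ℚ, Y) is a Baire space, but for every Fréchet space Y with dim Y > 0 the space C_p(ℚ, Y) is not a Baire space; here ℚ carries the subspace topology inherited from ℝ. -/

import Mathlib

open Set Filter Topology Ordinal TopologicalSpace

/-- A map `φ : K → M` is *almost open* if the image of every nonempty open set
has nonempty interior. -/
def AlmostOpenMap {K M : Type*} [TopologicalSpace K] [TopologicalSpace M] (φ : K → M) : Prop :=
  ∀ V : Set K, IsOpen V → V.Nonempty → (interior (φ '' V)).Nonempty

/-- The Baire class `B_α(X,Y)`: `B_0(X,Y)` is the set of continuous functions, and for `α > 0`,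
`B_α(X,Y)` is the set of pointwise limits of sequences from `C(X,Y) ∪ ⋃_{β<α} B_β(X,Y)`. -/
noncomputable def BaireClass (X Y : Type*) [TopologicalSpace X] [TopologicalSpace Y]
    (α : Ordinal.{0}) : Set (X → Y) :=
  if α = 0 then {f | Continuous f}
  else {f | ∃ g : ℕ → X → Y,
    (∀ n, Continuous (g n) ∨ ∃ β, ∃ _ : β < α, g n ∈ BaireClass X Y β) ∧
    ∀ x, Filter.Tendsto (fun n => g n x) Filter.atTop (nhds (f x))}
termination_by α

/-- `B_α(X,Y)` for `0 ≤ α ≤ ω₁`, where `B_{ω₁}(X,Y) = ⋃_{β<ω₁} B_β(X,Y)`. -/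
noncomputable def BaireFun (X Y : Type*) [TopologicalSpace X] [TopologicalSpace Y]
    (α : Ordinal.{0}) : Set (X → Y) :=
  if α = ω_ 1 then ⋃ β ∈ Set.Iio (ω_ 1 : Ordinal.{0}), BaireClass X Y β
  else BaireClass X Y α

/-- A (real) Fréchet space: a completely metrizable locally convex topological
vector space over `ℝ`. -/
def IsFrechetTVS (Y : Type*) [AddCommGroup Y] [Module ℝ Y] [t : TopologicalSpace Y] : Prop :=
  IsTopologicalAddGroup Y ∧ ContinuousSMul ℝ Y ∧ LocallyConvexSpace ℝ Y ∧
  ∃ m : MetricSpace Y, m.toPseudoMetricSpace.toUniformSpace.toTopologicalSpace = t ∧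
    @CompleteSpace Y m.toPseudoMetricSpace.toUniformSpace

/-- Any point of `ℚ` can be separated from a finite set of other points by a clopen set. -/
lemma exists_clopen_rat (a : ℚ) (s : Finset ℚ) (ha : a ∉ s) :
    ∃ C : Set ℚ, IsClopen C ∧ a ∈ C ∧ ∀ x ∈ s, x ∉ C := by
  rcases s.eq_empty_or_nonempty with rfl | hne
  · exact ⟨Set.univ, isClopen_univ, trivial, by simp⟩
  set d : ℚ := s.inf' hne (fun x => |x - a|) with hd_def
  have hd : 0 < d := by
    rw [hd_def, Finset.lt_inf'_iff]
    intro x hx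
    have : x ≠ a := fun h => ha (h ▸ hx)
    simpa [sub_eq_zero] using this
  set r : ℝ := (d : ℝ) * (Real.sqrt 2 / 2) with hr_def
  have hirr : Irrational r := by
    have : Irrational (Real.sqrt 2 / 2) := by
      simpa [div_eq_mul_inv, mul_comm] using
        ((irrational_sqrt_two.ratCast_mul (q := (1:ℚ)/2) (by norm_num)))
    have := this.ratCast_mul (q := d) hd.ne'
    simpa [hr_def] using this
  have hr0 : 0 < r := by
    have h2 : (0:ℝ) < Real.sqrt 2 / 2 := by positivity
    exact mul_pos (by exact_mod_cast hd) h2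
  have hrd : r < (d : ℝ) := by
    have h1 : Real.sqrt 2 / 2 < 1 := by
      rw [div_lt_one (by norm_num : (0:ℝ) < 2)]
      nlinarith [Real.sq_sqrt (by norm_num : (2:ℝ) ≥ 0), Real.sqrt_nonneg 2]
    calc r < (d:ℝ) * 1 := by
            apply mul_lt_mul_of_pos_left h1 (by exact_mod_cast hd)
      _ = d := mul_one _
  have hdist : ∀ x y : ℚ, dist x y = ((|x - y| : ℚ) : ℝ) := by
    intro x y; rw [Rat.dist_eq]; push_cast; ring_nf
  have hkey : ∀ x : ℚ, dist x a ≠ r := by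
    intro x h
    exact hirr ⟨|x - a|, by rw [← h, hdist]⟩
  refine ⟨Metric.ball a r, ⟨?_, Metric.isOpen_ball⟩, by simpa using hr0, ?_⟩
  · have : Metric.ball a r = Metric.closedBall a r := by
      ext x
      simp only [Metric.mem_ball, Metric.mem_closedBall]
      constructor
      · exact le_of_lt
      · intro h; exact lt_of_le_of_ne h (hkey x)
    rw [this]; exact Metric.isClosed_closedBall
  · intro x hx hxC
    rw [Metric.mem_ball, hdist] at hxC
    have : d ≤ |x - a| := Finset.inf'_le _ hx
    have : (d : ℝ) ≤ ((|x - a| : ℚ) : ℝ) := by exact_mod_cast this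
    linarith

/-- On `ℚ` one can interpolate arbitrary prescribed values at finitely many points by a
continuous function. -/
lemma interp_rat {Y : Type*} [TopologicalSpace Y] [Zero Y] (s : Finset ℚ) (v : ℚ → Y) :
    ∃ f : ℚ → Y, Continuous f ∧ ∀ x ∈ s, f x = v x := by
  classical
  induction s using Finset.induction_on with
  | empty => exact ⟨fun _ => 0, continuous_const, by simp⟩
  | insert a s ha ih =>
    obtain ⟨f, hf, hfs⟩ := ih
    obtain ⟨C, hC, haC, hsC⟩ := exists_clopen_rat a s ha
    refine ⟨C.piecewise (fun _ => v a) f, ?_, ?_⟩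
    · exact Continuous.piecewise (by simp [hC.frontier_eq]) continuous_const hf
    · intro x hx
      rcases Finset.mem_insert.1 hx with rfl | hx
      · simp [Set.piecewise_eq_of_mem _ _ _ haC]
      · rw [Set.piecewise_eq_of_notMem _ _ _ (hsC x hx)]
        exact hfs x hx

/-- The Baire property transfers along homeomorphisms. -/
lemma BaireSpace.of_homeomorph {X Z : Type*} [TopologicalSpace X] [TopologicalSpace Z]
    (e : X ≃ₜ Z) [BaireSpace Z] : BaireSpace X := by
  constructor
  intro f ho hd
  have h : Dense (⋂ n, e.symm ⁻¹' f n) :=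
    dense_iInter_of_isOpen (fun n => (ho n).preimage e.symm.continuous)
      (fun n => (hd n).preimage e.symm.isOpenMap)
  rw [← Set.preimage_iInter] at h
  have h2 : Dense (e.symm '' (e.symm ⁻¹' ⋂ n, f n)) :=
    e.symm.surjective.denseRange.dense_image e.symm.continuous h
  rwa [Set.image_preimage_eq _ e.symm.surjective] at h2

theorem statement12 :
    (∀ (Y : Type) (_ : AddCommGroup Y) (_ : Module ℝ Y) (_ : TopologicalSpace Y),
      IsFrechetTVS Y → BaireSpace ↥(BaireClass ℚ Y 1)) ∧
    (∀ (Y : Type) (_ : AddCommGroup Y) (_ : Module ℝ Y) (_ : TopologicalSpace Y),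
      IsFrechetTVS Y → Nontrivial Y → ¬ BaireSpace ↥{f : ℚ → Y | Continuous f}) := by
  constructor
  · -- `B₁(ℚ, Y)` is a Baire space
    rintro Y _ _ t ⟨-, -, -, m, htop, hcomp⟩
    subst htop
    have huniv : BaireClass ℚ Y 1 = Set.univ := by
      ext f
      simp only [Set.mem_univ, iff_true]
      rw [BaireClass]
      simp only [one_ne_zero, if_false, Set.mem_setOf_eq]
      set e : ℕ ≃ ℚ := (Denumerable.eqv ℚ).symm
      have hg : ∀ n : ℕ, ∃ g : ℚ → Y, Continuous g ∧
          ∀ x ∈ (Finset.range (n+1)).image e, g x = f x := fun n =>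
        interp_rat _ f
      choose g hgc hgf using hg
      refine ⟨g, fun n => Or.inl (hgc n), fun x => ?_⟩
      apply tendsto_atTop_of_eventually_const (i₀ := e.symm x)
      intro n hn
      apply hgf
      simp only [Finset.mem_image, Finset.mem_range]
      exact ⟨e.symm x, Nat.lt_succ_of_le hn, e.apply_symm_apply x⟩
    haveI : BaireSpace (ℚ → Y) := by
      letI : UniformSpace Y := m.toPseudoMetricSpace.toUniformSpace
      haveI : CompleteSpace Y := hcomp
      letI pm : PseudoMetricSpace (ℚ → Y) := UniformSpace.pseudoMetricSpace _
      haveI : @CompleteSpace (ℚ → Y) pm.toUniformSpace := by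
        have h : pm.toUniformSpace = Pi.uniformSpace _ := rfl
        rw [h]; infer_instance
      exact BaireSpace.of_completelyPseudoMetrizable
    exact BaireSpace.of_homeomorph ((Homeomorph.setCongr huniv).trans (Homeomorph.Set.univ _))
  · -- `C_p(ℚ, Y)` is not a Baire space
    rintro Y ag mo t ⟨hga, hsm, hlc, m, htop, hcomp⟩ hnt
    classical
    subst htop
    haveI := hga; haveI := hsm; haveI := hlc
    haveI : T1Space Y := by
      letI := m; infer_instance
    obtain ⟨y₀, hy₀⟩ := exists_ne (0 : Y)
    obtain ⟨L, hL⟩ := geometric_hahn_banach_point_point (x := (0:Y)) (y := y₀) (Ne.symm hy₀)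
    rw [map_zero] at hL
    set c : ℝ := L y₀ with hc
    set x : ℕ → ℚ := fun m => 1 / (m + 1) with hx
    have hxinj : Function.Injective x := by
      intro a b hab
      simp only [hx, one_div] at hab
      have : ((a:ℚ) + 1) = (b + 1) := by
        have := congrArg (·⁻¹) hab
        simpa using this
      have h2 := add_right_cancel this
      exact_mod_cast h2
    set z : ℕ → Y := fun n => (((n : ℝ) + 1) / c) • y₀ with hz
    have hLz : ∀ n : ℕ, L (z n) = (n : ℝ) + 1 := by
      intro n
      simp only [hz, map_smul, _root_.smul_eq_mul]
      field_simp
      exact hc.symm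
    set S : Set (ℚ → Y) := {f | Continuous f} with hS
    set D : ℕ → Set (ℚ → Y) := fun n => {f | ∃ m, (n : ℝ) < L (f (x m))} with hD
    set F : ℕ → Set ↥S := fun n => Subtype.val ⁻¹' (D n) with hF
    have hDopen : ∀ n, IsOpen (D n) := by
      intro n
      have : D n = ⋃ m, (fun f : ℚ → Y => f (x m)) ⁻¹' (L ⁻¹' Ioi (n : ℝ)) := by
        ext f; simp [hD]
      rw [this]
      exact isOpen_iUnion fun m =>
        (isOpen_Ioi.preimage L.continuous).preimage (continuous_apply (x m))
    have hFopen : ∀ n, IsOpen (F n) := fun n => (hDopen n).preimage continuous_subtype_val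
    have hFdense : ∀ n, Dense (F n) := by
      intro n
      rw [dense_iff_inter_open]
      rintro U hU ⟨g, hgU⟩
      obtain ⟨O, hOopen, hOeq⟩ := isOpen_induced_iff.1 hU
      have hgO : (g : ℚ → Y) ∈ O := by rw [← hOeq] at hgU; exact hgU
      obtain ⟨I, u, hu, hIsub⟩ := isOpen_pi_iff.1 hOopen _ hgO
      have hm : ∃ m, x m ∉ I := by
        by_contra hcon
        push_neg at hcon
        have : Set.range x ⊆ (I : Set ℚ) := by rintro _ ⟨m, rfl⟩; exact hcon m
        exact (Set.infinite_range_of_injective hxinj) (I.finite_toSet.subset this)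
      obtain ⟨m, hmI⟩ := hm
      set v : ℚ → Y := fun q => if q = x m then z n else (g : ℚ → Y) q with hv
      obtain ⟨f, hfc, hfv⟩ := interp_rat (insert (x m) I) v
      have hfxm : f (x m) = z n := by
        rw [hfv _ (Finset.mem_insert_self _ _)]; simp [hv]
      have hfI : ∀ i ∈ I, f i = (g : ℚ → Y) i := by
        intro i hi
        rw [hfv _ (Finset.mem_insert_of_mem hi)]
        have : i ≠ x m := fun h => hmI (h ▸ hi)
        simp [hv, this]
      have hfO : f ∈ O := by
        apply hIsub
        intro i hi
        rw [hfI i hi]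
        exact (hu i hi).2
      refine ⟨⟨f, hfc⟩, ?_, ?_⟩
      · rw [← hOeq]; exact hfO
      · show f ∈ D n
        refine ⟨m, ?_⟩
        rw [hfxm, hLz]
        linarith
    set G : Set ↥S := Subtype.val ⁻¹' {f : ℚ → Y | L (f 0) < 1} with hG
    have hGopen : IsOpen G := by
      have hc2 : Continuous fun f : ℚ → Y => L (f 0) := L.continuous.comp (continuous_apply 0)
      exact (isOpen_lt hc2 continuous_const).preimage continuous_subtype_val
    have hGne : G.Nonempty := by
      refine ⟨⟨fun _ => 0, continuous_const⟩, ?_⟩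
      simp [hG]
    have hempty : (G ∩ ⋂ n, F n) = ∅ := by
      rw [Set.eq_empty_iff_forall_notMem]
      rintro ⟨f, hfc⟩ ⟨hfG, hfF⟩
      simp only [Set.mem_iInter] at hfF
      have hfm : ∀ n : ℕ, ∃ m, (n : ℝ) < L (f (x m)) := fun n => hfF n
      set M : Set ℕ := {m | 1 ≤ L (f (x m))} with hM
      have hMinf : M.Infinite := by
        intro hfin
        obtain ⟨B, hB⟩ := (hfin.image (fun m => L (f (x m)))).bddAbove
        obtain ⟨n, hn⟩ := exists_nat_gt (max B 1)
        obtain ⟨m, hm⟩ := hfm n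
        have h1 : 1 ≤ L (f (x m)) := by
          have : (1:ℝ) ≤ max B 1 := le_max_right _ _
          linarith
        have : L (f (x m)) ≤ B := hB ⟨m, h1, rfl⟩
        have : L (f (x m)) ≤ max B 1 := le_trans this (le_max_left _ _)
        linarith
      have hsel : ∀ k : ℕ, ∃ m ∈ M, k < m := fun k => hMinf.exists_gt k
      choose φ hφM hφgt using hsel
      have htend : Tendsto (fun k => x (φ k)) atTop (𝓝 (0:ℚ)) := by
        rw [tendsto_iff_dist_tendsto_zero]
        have hle : ∀ k : ℕ, dist (x (φ k)) 0 ≤ 1 / ((k:ℝ) + 1) := by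
          intro k
          rw [Rat.dist_eq]
          have h1 : ((x (φ k) : ℚ) : ℝ) = 1 / ((φ k : ℝ) + 1) := by
            simp [hx]
          rw [h1]
          simp only [Rat.cast_zero, _root_.sub_zero]
          rw [abs_of_pos (by positivity)]
          apply div_le_div_of_nonneg_left (by norm_num) (by positivity)
          have : (k:ℝ) < φ k := by exact_mod_cast hφgt k
          linarith
        have hge : ∀ k : ℕ, (0:ℝ) ≤ dist (x (φ k)) 0 := fun k => dist_nonneg
        exact squeeze_zero hge hle tendsto_one_div_add_atTop_nhds_zero_nat
      have htend2 : Tendsto (fun k => L (f (x (φ k)))) atTop (𝓝 (L (f 0))) :=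
        ((L.continuous.comp hfc).tendsto 0).comp htend
      have h1le : 1 ≤ L (f 0) := ge_of_tendsto' htend2 (fun k => hφM k)
      have : L (f 0) < 1 := hfG
      linarith
    intro hB
    have hdense : Dense (⋂ n, F n) := dense_iInter_of_isOpen hFopen hFdense
    obtain ⟨_, h1, h2⟩ := (dense_iff_inter_open.1 hdense) G hGopen hGne
    rw [Set.eq_empty_iff_forall_notMem] at hempty
    exact hempty _ ⟨h1, h2⟩
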